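/- Let ρ be a density matrix on ℂ^d and let Φ be a quantum channel on ℂ^d with Kraus operators {K_i}. Then 2·V_ρ(Φ) − I_ρ(Φ) = (1/2) Σ_i tr( {√ρ, K̃_i}† {√ρ, K̃_i} ), where K̃_i = K_i − tr(K_i ρ)·I is the centered Kraus operator and {A,B} = AB + BA. -/

import Mathlib

open Matrix
open scoped ComplexOrder

noncomputable section

def Matrix.PosSemidef.sqrt {n 𝕜 : Type*} [Fintype n] [RCLike 𝕜] [DecidableEq n]
    {A : Matrix n n 𝕜} (hA : A.PosSemidef) : Matrix n n 𝕜 :=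
  hA.1.eigenvectorUnitary.1 * diagonal ((↑) ∘ (√·) ∘ hA.1.eigenvalues) *
  (star hA.1.eigenvectorUnitary : Matrix n n 𝕜)

/-- Variance of an operator `K` with respect to a state `ρ`:
`V_ρ(K) = ½ tr((K†K + KK†)ρ) − |tr(Kρ)|²`. -/
def opVar {d : ℕ} (ρ K : Matrix (Fin d) (Fin d) ℂ) : ℝ :=
  (((Kᴴ * K + K * Kᴴ) * ρ).trace).re / 2 - ‖(K * ρ).trace‖ ^ 2

/-- Variance of a channel with Kraus operators `K i`: `V_ρ(Φ) = Σ_i V_ρ(K_i)`. -/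
def chanVar {d n : ℕ} (ρ : Matrix (Fin d) (Fin d) ℂ)
    (K : Fin n → Matrix (Fin d) (Fin d) ℂ) : ℝ :=
  ∑ i, opVar ρ (K i)

/-- Wigner–Yanase skew information of a channel with Kraus operators `K i`:
`I_ρ(Φ) = ½ Σ_i ‖[√ρ, K_i]‖_F²`, where `√ρ` is the PSD square root of `ρ`. -/
def chanSkew {d n : ℕ} (ρ : Matrix (Fin d) (Fin d) ℂ) (hρ : ρ.PosSemidef)
    (K : Fin n → Matrix (Fin d) (Fin d) ℂ) : ℝ :=
  (1 / 2) * ∑ i,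
    (((hρ.sqrt * K i - K i * hρ.sqrt)ᴴ * (hρ.sqrt * K i - K i * hρ.sqrt)).trace).re

/-- Quantum uncertainty of a channel:
`Q_ρ(Φ) = √(V_ρ(Φ)² − (V_ρ(Φ) − I_ρ(Φ))²)`. -/
def chanQ {d n : ℕ} (ρ : Matrix (Fin d) (Fin d) ℂ) (hρ : ρ.PosSemidef)
    (K : Fin n → Matrix (Fin d) (Fin d) ℂ) : ℝ :=
  Real.sqrt ((chanVar ρ K) ^ 2 - (chanVar ρ K - chanSkew ρ hρ K) ^ 2)


lemma sqrt_conjTranspose_self' {d : ℕ} {A : Matrix (Fin d) (Fin d) ℂ} (hA : A.PosSemidef) :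
    (hA.sqrt)ᴴ = hA.sqrt := by
  have hD : star (RCLike.ofReal ∘ (√·) ∘ hA.1.eigenvalues : Fin d → ℂ) = RCLike.ofReal ∘ (√·) ∘ hA.1.eigenvalues := by
    funext i; simp
  rw [Matrix.PosSemidef.sqrt, conjTranspose_mul, conjTranspose_mul, diagonal_conjTranspose, hD]
  simp only [Matrix.star_eq_conjTranspose, conjTranspose_conjTranspose, mul_assoc]

lemma sqrt_mul_self' {d : ℕ} {A : Matrix (Fin d) (Fin d) ℂ} (hA : A.PosSemidef) :
    hA.sqrt * hA.sqrt = A := by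
  have hU : (star hA.1.eigenvectorUnitary : Matrix (Fin d) (Fin d) ℂ) * hA.1.eigenvectorUnitary = 1 :=
    Unitary.star_mul_self_of_mem hA.1.eigenvectorUnitary.2
  conv_rhs => rw [hA.1.spectral_theorem]
  rw [Unitary.conjStarAlgAut_apply, Matrix.PosSemidef.sqrt]
  rw [show ∀ U D S : Matrix (Fin d) (Fin d) ℂ, U * D * S * (U * D * S) = U * (D * (S * U) * D) * S
    by intros; simp only [mul_assoc], hU, mul_one, diagonal_mul_diagonal]
  congr 3
  funext i
  simp only [Function.comp_apply]
  rw [← RCLike.ofReal_mul, Real.mul_self_sqrt (hA.eigenvalues_nonneg i)]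

-- parallelogram-type identity for traces
lemma lem1 {d : ℕ} (s M : Matrix (Fin d) (Fin d) ℂ) (hs : sᴴ = s) :
    ((s*M + M*s)ᴴ * (s*M + M*s)).trace + ((s*M - M*s)ᴴ * (s*M - M*s)).trace
      = 2 * ((Mᴴ*M + M*Mᴴ) * (s*s)).trace := by
  have h1 : ((Mᴴ*s) * (s*M)).trace = ((M*Mᴴ) * (s*s)).trace := by
    rw [show (Mᴴ*s) * (s*M) = (Mᴴ*(s*s))*M by noncomm_ring,
        show (M*Mᴴ) * (s*s) = M*(Mᴴ*(s*s)) by noncomm_ring, trace_mul_comm]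
  have h2 : ((s*Mᴴ) * (M*s)).trace = ((Mᴴ*M) * (s*s)).trace := by
    rw [show (s*Mᴴ) * (M*s) = s*((Mᴴ*M)*s) by noncomm_ring, trace_mul_comm,
        show (Mᴴ*M)*s*s = (Mᴴ*M)*(s*s) by noncomm_ring]
  have h3 : ((s*Mᴴ) * (s*M)).trace = ((Mᴴ*s) * (M*s)).trace := by
    rw [show (s*Mᴴ) * (s*M) = s*(Mᴴ*(s*M)) by noncomm_ring, trace_mul_comm,
        show Mᴴ*(s*M)*s = (Mᴴ*s)*(M*s) by noncomm_ring]
  simp only [conjTranspose_add, conjTranspose_sub, conjTranspose_mul, hs,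
    Matrix.add_mul, Matrix.mul_add, Matrix.sub_mul, Matrix.mul_sub,
    trace_add, trace_sub, Matrix.mul_add, mul_add]
  rw [h1, h2, h3]
  ring

lemma lem2 {d : ℕ} (ρ K : Matrix (Fin d) (Fin d) ℂ) (hρ : ρᴴ = ρ) (htr : ρ.trace = 1) :
    (((K - ((K*ρ).trace) • 1)ᴴ * (K - ((K*ρ).trace) • 1)
      + (K - ((K*ρ).trace) • 1) * (K - ((K*ρ).trace) • 1)ᴴ) * ρ).trace
      = ((Kᴴ*K + K*Kᴴ) * ρ).trace - 2 * ((K*ρ).trace * star ((K*ρ).trace)) := by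
  set c := (K*ρ).trace with hc
  have hKc : (Kᴴ*ρ).trace = star c := by
    rw [show Kᴴ*ρ = (ρᴴ*K)ᴴ by rw [conjTranspose_mul, conjTranspose_conjTranspose],
      trace_conjTranspose, hρ, trace_mul_comm]
  simp only [conjTranspose_sub, conjTranspose_smul, conjTranspose_one,
    Matrix.sub_mul, Matrix.mul_sub, Matrix.add_mul, Matrix.smul_mul, Matrix.mul_smul,
    Matrix.one_mul, Matrix.mul_one, trace_add, trace_sub, trace_smul, htr, hKc, ← hc,
    smul_eq_mul, trace_one]
  ring_nf

lemma key {d : ℕ} (ρ : Matrix (Fin d) (Fin d) ℂ) (hρ : ρ.PosSemidef) (htr : ρ.trace = 1)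
    (K : Matrix (Fin d) (Fin d) ℂ) :
    4 * opVar ρ K
      - (((hρ.sqrt * K - K * hρ.sqrt)ᴴ * (hρ.sqrt * K - K * hρ.sqrt)).trace).re
    = (((hρ.sqrt * (K - ((K * ρ).trace) • 1) + (K - ((K * ρ).trace) • 1) * hρ.sqrt)ᴴ *
        (hρ.sqrt * (K - ((K * ρ).trace) • 1) +
          (K - ((K * ρ).trace) • 1) * hρ.sqrt)).trace).re := by
  set s := hρ.sqrt with hs
  set c := (K*ρ).trace with hc
  set Kt := K - c • 1 with hKt
  have hsH : sᴴ = s := sqrt_conjTranspose_self' hρ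
  have hss : s * s = ρ := sqrt_mul_self' hρ
  have hcomm : s * Kt - Kt * s = s * K - K * s := by
    simp only [hKt, Matrix.mul_sub, Matrix.sub_mul, Matrix.mul_smul, Matrix.smul_mul,
      Matrix.mul_one, Matrix.one_mul]
    abel
  have main := lem1 s Kt hsH
  rw [hcomm, hss, lem2 ρ K hρ.isHermitian htr, ← hc] at main
  have hmc : c * star c = (‖c‖ ^ 2 : ℝ) := by
    rw [show (star c) = (starRingEnd ℂ) c from rfl, Complex.mul_conj]
    norm_cast
    rw [Complex.sq_norm]
  rw [hmc] at main
  have := congrArg Complex.re main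
  simp only [Complex.add_re, Complex.sub_re, Complex.mul_re, Complex.ofReal_re,
    Complex.ofReal_im, Complex.re_ofNat, Complex.im_ofNat, mul_zero, zero_mul, sub_zero] at this
  simp only [opVar, ← hc]
  linarith

/-- `2 V_ρ(Φ) − I_ρ(Φ) = ½ Σ_i tr({√ρ, K̃_i}† {√ρ, K̃_i})` with
`K̃_i = K_i − tr(K_i ρ)·I` the centered Kraus operators. -/
theorem stmt_10 {d n : ℕ}
    (ρ : Matrix (Fin d) (Fin d) ℂ) (hρ : ρ.PosSemidef) (htr : ρ.trace = 1)
    (K : Fin n → Matrix (Fin d) (Fin d) ℂ) (hK : ∑ i, (K i)ᴴ * K i = 1) :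
    2 * chanVar ρ K - chanSkew ρ hρ K =
      (1 / 2) * ∑ i,
        (((hρ.sqrt * (K i - ((K i * ρ).trace) • 1) + (K i - ((K i * ρ).trace) • 1) * hρ.sqrt)ᴴ *
          (hρ.sqrt * (K i - ((K i * ρ).trace) • 1) +
            (K i - ((K i * ρ).trace) • 1) * hρ.sqrt)).trace).re := by
  simp only [chanVar, chanSkew, Finset.mul_sum, ← Finset.sum_sub_distrib]
  refine Finset.sum_congr rfl fun i _ => ?_
  have := key ρ hρ htr (K i)
  linarith
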